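/- Let A be a ring and C an n-cosilting A-module with respect to an injective n-copresentation Ω (so Copres^{n-1}(C) = B_Ω). Then the subcategory {}^{⊥ℤ}Ω = {Y ∈ D(A) | Hom_{D(A)}(Y, Ω[i]) = 0 for all i ∈ ℤ} contains no nonzero A-module. -/

import Mathlib

open CategoryTheory Limits DerivedCategory

universe u

/-- Let `C` be an `n`-cosilting `A`-module with respect to an injective
`n`-copresentation `W` (i.e. `Copres^{n-1}(C) = B_W`).  Then
`^{⊥ℤ}W = {Y | Hom_{D(A)}(Y, W[i]) = 0 ∀ i ∈ ℤ}` contains no nonzero `A`-module. -/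
theorem stmt8 {A : Type u} [Ring A] [HasDerivedCategory.{u} (ModuleCat.{u} A)]
    (n : ℕ) (hn : 0 < n) (W : CochainComplex (ModuleCat.{u} A) ℤ)
    (hWb : ∀ i : ℤ, (i < 0 ∨ (n : ℤ) < i) → IsZero (W.X i))
    (hWinj : ∀ i : ℤ, Injective (W.X i))
    (hWE : ∀ i : ℤ, 0 < i → i < (n : ℤ) → IsZero (W.homology i))
    (C : ModuleCat.{u} A) (hC : Nonempty ((W.homology 0) ≅ C))
    (hcosilting : ∀ M : ModuleCat.{u} A,
      (∃ (E : ℕ → ModuleCat.{u} A)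
          (d : ∀ j : ℕ, E j →ₗ[A] E (j + 1)) (f : M →ₗ[A] E 0),
        (∀ j < n, ∃ (ι : Type u) (s : E j →ₗ[A] (ι → ↥C)) (p : (ι → ↥C) →ₗ[A] E j),
          p.comp s = LinearMap.id) ∧
        Function.Injective f ∧ (2 ≤ n → Function.Exact f (d 0)) ∧
        (∀ j : ℕ, j + 3 ≤ n → Function.Exact (d j) (d (j + 1)))) ↔
      (∀ i : ℤ, 0 < i →
        ∀ φ : ((singleFunctor (ModuleCat.{u} A) 0).obj M) ⟶ (Q.obj W)⟦i⟧, φ = 0)) :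
    ∀ M : ModuleCat.{u} A,
      (∀ i : ℤ, ∀ φ : ((singleFunctor (ModuleCat.{u} A) 0).obj M) ⟶ (Q.obj W)⟦i⟧, φ = 0) →
      IsZero M := by
  intro M h
  obtain ⟨e⟩ := hC
  -- the differential into degree 0 vanishes
  have hd : W.d (-1) 0 = 0 := (hWb (-1) (Or.inl (by norm_num))).eq_of_src _ _
  have hprev : (ComplexShape.up ℤ).prev 0 = -1 := by simp
  -- Key step: every morphism `g : M ⟶ C` is zero.
  have key : ∀ g : M ⟶ C, g = 0 := by
    intro g
    -- build the chain map `ψ : single M ⟶ W`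
    let πiso : W.cycles 0 ≅ W.homology 0 := W.isoHomologyπ (-1) 0 hprev hd
    let ψ : (HomologicalComplex.single (ModuleCat.{u} A) (ComplexShape.up ℤ) 0).obj M ⟶ W :=
      HomologicalComplex.mkHomFromSingle (g ≫ e.inv ≫ πiso.inv ≫ W.iCycles 0)
        (fun k hk => by simp)
    -- `Q.map ψ = 0` by the hypothesis at `i = 0`
    have hQψ : Q.map ψ = 0 := by
      have h0 := h 0 (Q.map ψ ≫
        (shiftFunctorZero (DerivedCategory (ModuleCat.{u} A)) ℤ).inv.app (Q.obj W))
      have := congrArg (fun φ => φ ≫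
        (shiftFunctorZero (DerivedCategory (ModuleCat.{u} A)) ℤ).hom.app (Q.obj W)) h0
      exact (cancel_mono ((shiftFunctorZero (DerivedCategory (ModuleCat.{u} A)) ℤ).inv.app
        (Q.obj W))).1 (h0.trans zero_comp.symm)
    -- hence the homology map of `ψ` in degree 0 vanishes
    have hH : HomologicalComplex.homologyMap ψ 0 = 0 := by
      have hnat := (homologyFunctorFactors (ModuleCat.{u} A) 0).hom.naturality ψ
      rw [Functor.comp_map, hQψ, Functor.map_zero, zero_comp] at hnat
      have := congrArg (fun t => (homologyFunctorFactors (ModuleCat.{u} A) 0).inv.app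
        ((HomologicalComplex.single (ModuleCat.{u} A) (ComplexShape.up ℤ) 0).obj M) ≫ t) hnat
      exact (cancel_epi ((homologyFunctorFactors (ModuleCat.{u} A) 0).hom.app _)).1
        (hnat.symm.trans comp_zero.symm)
    -- hence the cycles map vanishes
    have hcyc : HomologicalComplex.cyclesMap ψ 0 = 0 := by
      have h2 : HomologicalComplex.cyclesMap ψ 0 ≫ W.homologyπ 0 = 0 := by
        rw [← HomologicalComplex.homologyπ_naturality ψ 0, hH, comp_zero]
      have := congrArg (fun t => t ≫ (W.isoHomologyπ (-1) 0 hprev hd).inv) h2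
      simpa using this
    -- hence `ψ.f 0 = 0`
    have hf0 : ψ.f 0 = 0 := by
      have hi := HomologicalComplex.cyclesMap_i ψ 0
      rw [hcyc, zero_comp] at hi
      have hd0 : ((HomologicalComplex.single (ModuleCat.{u} A)
          (ComplexShape.up ℤ) 0).obj M).d 0 1 = 0 := by simp
      have := ((HomologicalComplex.single (ModuleCat.{u} A)
        (ComplexShape.up ℤ) 0).obj M).isIso_iCycles 0 1 (by simp) hd0
      rw [← cancel_epi (((HomologicalComplex.single (ModuleCat.{u} A)
        (ComplexShape.up ℤ) 0).obj M).iCycles 0), comp_zero, ← hi]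
    -- conclude `g = 0`
    have : (HomologicalComplex.singleObjXSelf (ComplexShape.up ℤ) 0 M).hom ≫
        (g ≫ e.inv ≫ πiso.inv ≫ W.iCycles 0) = 0 := by
      rw [← HomologicalComplex.mkHomFromSingle_f]; exact hf0
    have h1 : g ≫ e.inv ≫ πiso.inv ≫ W.iCycles 0 = 0 := by
      simpa using congrArg (fun t =>
        (HomologicalComplex.singleObjXSelf (ComplexShape.up ℤ) 0 M).inv ≫ t) this
    have hmono : Mono (e.inv ≫ πiso.inv ≫ W.iCycles 0) := mono_comp _ _
    rw [← cancel_mono (e.inv ≫ πiso.inv ≫ W.iCycles 0), zero_comp]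
    simpa using h1
  -- use the cosilting hypothesis to embed `M` into a product of copies of `C`
  obtain ⟨E, d, f, hret, hinj, -, -⟩ := (hcosilting M).2 (fun i _ φ => h i φ)
  obtain ⟨ι, s, p, hps⟩ := hret 0 hn
  have hSub : Subsingleton M := by
    refine ⟨fun x y => ?_⟩
    suffices hz : ∀ z : M, z = 0 by rw [hz x, hz y]
    intro z
    have hs : s (f z) = 0 := by
      funext i₀
      have := key (ModuleCat.ofHom ((LinearMap.proj i₀).comp (s.comp f)))
      have := congrArg (fun (t : M ⟶ C) => t z) this
      simpa using this
    have : f z = 0 := by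
      have := congrArg (fun (t : ↥(E 0) →ₗ[A] ↥(E 0)) => t (f z)) hps
      simp only [LinearMap.comp_apply, LinearMap.id_apply] at this
      rw [← this, hs, map_zero]
    have := hinj (a₁ := z) (a₂ := 0) (by simpa using this)
    exact this
  exact ModuleCat.isZero_of_subsingleton M
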